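/- Every generating set G of the monoid IOF_n^par (n ≥ 4) contains the transformation u_{n−2} (domain {1,...,n−2}, ρ ↦ ρ+2) and the transformation x_{n−2} (domain {3,...,n}, ρ ↦ ρ−2). -/

import Mathlib

/-- A partial injection on `{1,...,n}`, represented by its graph. -/
structure PInj (n : ℕ) where
  R : ℕ → ℕ → Prop
  memL : ∀ ⦃x y⦄, R x y → x ∈ Set.Icc 1 n
  memR : ∀ ⦃x y⦄, R x y → y ∈ Set.Icc 1 n
  func : ∀ ⦃x y y'⦄, R x y → R x y' → y = y'
  inj : ∀ ⦃x x' y⦄, R x y → R x' y → x = x'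

namespace PInj

variable {n : ℕ}

@[ext] theorem ext {a b : PInj n} (h : ∀ x y, a.R x y ↔ b.R x y) : a = b := by
  cases a; cases b
  simp only [mk.injEq]
  funext x y
  exact propext (h x y)

instance : Mul (PInj n) :=
  ⟨fun a b =>
    { R := fun x z => ∃ y, a.R x y ∧ b.R y z
      memL := by rintro x z ⟨y, h1, _⟩; exact a.memL h1
      memR := by rintro x z ⟨y, _, h2⟩; exact b.memR h2
      func := by
        rintro x z z' ⟨y, h1, h2⟩ ⟨y', h1', h2'⟩
        obtain rfl := a.func h1 h1'
        exact b.func h2 h2'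
      inj := by
        rintro x x' z ⟨y, h1, h2⟩ ⟨y', h1', h2'⟩
        obtain rfl := b.inj h2 h2'
        exact a.inj h1 h1' }⟩

instance : One (PInj n) :=
  ⟨{ R := fun x y => x ∈ Set.Icc 1 n ∧ y = x
     memL := by rintro x y ⟨h, rfl⟩; exact h
     memR := by rintro x y ⟨h, rfl⟩; exact h
     func := by rintro x y y' ⟨_, rfl⟩ ⟨_, rfl⟩; rfl
     inj := by rintro x x' y ⟨_, rfl⟩ ⟨_, h⟩; exact h }⟩

instance : Monoid (PInj n) where
  mul_assoc a b c := by
    ext x y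
    constructor
    · rintro ⟨z, ⟨w, h1, h2⟩, h3⟩; exact ⟨w, h1, z, h2, h3⟩
    · rintro ⟨w, h1, z, h2, h3⟩; exact ⟨z, ⟨w, h1, h2⟩, h3⟩
  one_mul a := by
    ext x y
    constructor
    · rintro ⟨z, ⟨_, rfl⟩, h⟩; exact h
    · intro h; exact ⟨x, ⟨a.memL h, rfl⟩, h⟩
  mul_one a := by
    ext x y
    constructor
    · rintro ⟨z, h, _, rfl⟩; exact h
    · intro h; exact ⟨y, h, a.memR h, rfl⟩

/-- The inverse of a partial injection. -/
def inv (a : PInj n) : PInj n where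
  R := fun x y => a.R y x
  memL := by intro x y h; exact a.memR h
  memR := by intro x y h; exact a.memL h
  func := by intro x y y' h h'; exact a.inj h h'
  inj := by intro x x' y h h'; exact a.func h h'

/-- The domain of a partial injection. -/
def dom (a : PInj n) : Set ℕ := {x | ∃ y, a.R x y}

/-- The image of a partial injection. -/
def im (a : PInj n) : Set ℕ := {y | ∃ x, a.R x y}

end PInj

/-- The strict fence (zig-zag) order on `{1,...,n}`: `x ≺ y` iff `x` is odd and
`x`, `y` are adjacent.  It is generated by `i ≺ i+1` for odd `i` and `i+1 ≺ i`
for even `i`. -/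
def FenceLt (x y : ℕ) : Prop := Odd x ∧ (y = x + 1 ∨ x = y + 1)

/-- Membership in `IOF_n^par`: order-preserving, parity-preserving,
fence-preserving, and with fence-preserving inverse. -/
def IsIOF {n : ℕ} (a : PInj n) : Prop :=
  (∀ ⦃x y x' y'⦄, a.R x y → a.R x' y' → x < x' → y < y') ∧
  (∀ ⦃x y⦄, a.R x y → x % 2 = y % 2) ∧
  (∀ ⦃x y x' y'⦄, a.R x y → a.R x' y' → FenceLt x x' → FenceLt y y') ∧
  (∀ ⦃x y x' y'⦄, a.R x y → a.R x' y' → FenceLt y y' → FenceLt x x')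

/-- A partial identity: every point of the domain is fixed. -/
def IsPartialId {n : ℕ} (a : PInj n) : Prop := ∀ ⦃x y⦄, a.R x y → y = x

/-- The partial identity `v_i` with domain `{1,...,n} \ {i}`. -/
def vMap (n i : ℕ) : PInj n where
  R := fun x y => x ∈ Set.Icc 1 n ∧ x ≠ i ∧ y = x
  memL := by rintro x y ⟨h, _, rfl⟩; exact h
  memR := by rintro x y ⟨h, _, rfl⟩; exact h
  func := by rintro x y y' ⟨_, _, rfl⟩ ⟨_, _, rfl⟩; rfl
  inj := by rintro x x' y ⟨_, _, rfl⟩ ⟨_, _, h⟩; exact h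

/-- The map `u_i` with domain `{1,...,i} ∪ {i+4,...,n}`, sending `ρ ↦ ρ+2` for
`ρ ≤ i` and `ρ ↦ ρ` for `ρ ≥ i+4`. -/
def uMap (n i : ℕ) : PInj n where
  R := fun x y => x ∈ Set.Icc 1 n ∧ y ∈ Set.Icc 1 n ∧
        ((x ≤ i ∧ y = x + 2) ∨ (i + 4 ≤ x ∧ y = x))
  memL := by rintro x y ⟨h, _, _⟩; exact h
  memR := by rintro x y ⟨_, h, _⟩; exact h
  func := by
    rintro x y y' ⟨_, _, (⟨hx, rfl⟩ | ⟨hx, rfl⟩)⟩ ⟨_, _, (⟨hx', rfl⟩ | ⟨hx', rfl⟩)⟩ <;> omega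
  inj := by
    rintro x x' y ⟨_, _, (⟨hx, rfl⟩ | ⟨hx, rfl⟩)⟩ ⟨_, _, (⟨hx', h'⟩ | ⟨hx', h'⟩)⟩ <;> omega

/-- The set `J_i = {1,...,i} ∪ {i+4,...,n}`. -/
def Jset (n i : ℕ) : Set ℕ := {x | (1 ≤ x ∧ x ≤ i) ∨ (i + 4 ≤ x ∧ x ≤ n)}

/-- `G` is a generating set of the monoid `IOF_n^par`: it consists of elements of
`IOF_n^par` and every element of `IOF_n^par` is a finite product of elements of `G`. -/
def Generates (n : ℕ) (G : Set (PInj n)) : Prop :=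
  (∀ g ∈ G, IsIOF g) ∧
  ∀ a : PInj n, IsIOF a →
    ∃ l : List (PInj n), (∀ b ∈ l, b ∈ G) ∧ l.prod = a

section Aux

open Finset

attribute [local instance] Classical.propDecidable

variable {n : ℕ}

lemma mul_R (a b : PInj n) (x z : ℕ) : (a * b).R x z ↔ ∃ y, a.R x y ∧ b.R y z := Iff.rfl

/-- domain as a Finset -/
noncomputable def domF (a : PInj n) : Finset ℕ :=
  @Finset.filter _ (fun x => ∃ y, a.R x y) (fun _ => Classical.propDecidable _) (Finset.Icc 1 n)

noncomputable def imF (a : PInj n) : Finset ℕ :=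
  @Finset.filter _ (fun y => ∃ x, a.R x y) (fun _ => Classical.propDecidable _) (Finset.Icc 1 n)

lemma mem_domF {a : PInj n} {x : ℕ} : x ∈ domF a ↔ ∃ y, a.R x y := by
  unfold domF
  rw [Finset.mem_filter]
  constructor
  · exact fun h => h.2
  · rintro ⟨y, hy⟩
    exact ⟨by simpa using a.memL hy, ⟨y, hy⟩⟩

lemma mem_imF {a : PInj n} {y : ℕ} : y ∈ imF a ↔ ∃ x, a.R x y := by
  unfold imF
  rw [Finset.mem_filter]
  constructor
  · exact fun h => h.2
  · rintro ⟨x, hx⟩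
    exact ⟨by simpa using a.memR hx, ⟨x, hx⟩⟩

end Aux

section Aux2
open Finset
attribute [local instance] Classical.propDecidable

variable {n : ℕ}

lemma memIcc {a : PInj n} {x y : ℕ} (h : a.R x y) :
    (1 ≤ x ∧ x ≤ n) ∧ (1 ≤ y ∧ y ≤ n) :=
  ⟨Set.mem_Icc.mp (a.memL h), Set.mem_Icc.mp (a.memR h)⟩

lemma gapD {a : PInj n} (hd : n - 2 ≤ (domF a).card)
    {x y x' y' : ℕ} (hxy : a.R x y) (hxy' : a.R x' y') (hlt : x < x')
    (hgap : ∀ w z, a.R w z → ¬(x < w ∧ w < x')) : x' ≤ x + 3 := by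
  have hx1 := (memIcc hxy).1
  have hx2 := (memIcc hxy').1
  have hsub : domF a ⊆ Finset.Icc 1 n \ Finset.Ioo x x' := by
    intro w hw
    obtain ⟨z, hz⟩ := mem_domF.mp hw
    rw [Finset.mem_sdiff, Finset.mem_Ioo, Finset.mem_Icc]
    exact ⟨⟨(memIcc hz).1.1, (memIcc hz).1.2⟩, fun hc => hgap w z hz hc⟩
  have hcard := Finset.card_le_card hsub
  rw [Finset.card_sdiff_of_subset (by intro w hw; rw [Finset.mem_Ioo] at hw; rw [Finset.mem_Icc]; omega),
    Nat.card_Icc, Nat.card_Ioo] at hcard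
  omega

lemma gapI {a : PInj n} (hi : n - 2 ≤ (imF a).card)
    {x y x' y' : ℕ} (hxy : a.R x y) (hxy' : a.R x' y') (hlt : y < y')
    (hgap : ∀ w z, a.R w z → ¬(y < z ∧ z < y')) : y' ≤ y + 3 := by
  have hx1 := (memIcc hxy).2
  have hx2 := (memIcc hxy').2
  have hsub : imF a ⊆ Finset.Icc 1 n \ Finset.Ioo y y' := by
    intro w hw
    obtain ⟨z, hz⟩ := mem_imF.mp hw
    rw [Finset.mem_sdiff, Finset.mem_Ioo, Finset.mem_Icc]
    exact ⟨⟨(memIcc hz).2.1, (memIcc hz).2.2⟩, fun hc => hgap z w hz hc⟩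
  have hcard := Finset.card_le_card hsub
  rw [Finset.card_sdiff_of_subset (by intro w hw; rw [Finset.mem_Ioo] at hw; rw [Finset.mem_Icc]; omega),
    Nat.card_Icc, Nat.card_Ioo] at hcard
  omega

lemma localShift {a : PInj n} (ha : IsIOF a)
    (hd : n - 2 ≤ (domF a).card) (hi : n - 2 ≤ (imF a).card)
    {x y x' y' : ℕ} (hxy : a.R x y) (hxy' : a.R x' y') (hlt : x < x')
    (hgap : ∀ w z, a.R w z → ¬(x < w ∧ w < x')) : y' = y + (x' - x) := by
  obtain ⟨ho, hp, hf, hf'⟩ := ha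
  have h1 : y < y' := ho hxy hxy' hlt
  have h2 : x' ≤ x + 3 := gapD hd hxy hxy' hlt hgap
  have higap : ∀ w z, a.R w z → ¬(y < z ∧ z < y') := by
    rintro w z hwz ⟨hz1, hz2⟩
    rcases lt_trichotomy w x with h | h | h
    · exact absurd (ho hwz hxy h) (by omega)
    · subst h; exact absurd (a.func hwz hxy) (by omega)
    · rcases lt_trichotomy w x' with h' | h' | h'
      · exact hgap w z hwz ⟨h, h'⟩
      · subst h'; exact absurd (a.func hwz hxy') (by omega)
      · exact absurd (ho hxy' hwz h') (by omega)
  have h3 : y' ≤ y + 3 := gapI hi hxy hxy' h1 higap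
  have px : x % 2 = y % 2 := hp hxy
  have px' : x' % 2 = y' % 2 := hp hxy'
  have hA : x' = x + 1 → y' = y + 1 := by
    intro h
    rcases Nat.even_or_odd x with hx | hx
    · have hfl : FenceLt x' x := ⟨by rw [Nat.odd_iff] at *; rw [Nat.even_iff] at hx; omega, Or.inr h⟩
      obtain ⟨_, hc⟩ := hf hxy' hxy hfl
      omega
    · obtain ⟨_, hc⟩ := hf hxy hxy' ⟨hx, Or.inl h⟩
      omega
  have hB : y' = y + 1 → x' = x + 1 := by
    intro h
    rcases Nat.even_or_odd y with hy | hy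
    · have hfl : FenceLt y' y := ⟨by rw [Nat.odd_iff] at *; rw [Nat.even_iff] at hy; omega, Or.inr h⟩
      obtain ⟨_, hc⟩ := hf' hxy' hxy hfl
      omega
    · obtain ⟨_, hc⟩ := hf' hxy hxy' ⟨hy, Or.inl h⟩
      omega
  have hcase : x' = x + 1 ∨ x' = x + 2 ∨ x' = x + 3 := by omega
  rcases hcase with h | h | h
  · have := hA h; omega
  · omega
  · have hyc : y' = y + 1 ∨ y' = y + 3 := by omega
    rcases hyc with h' | h'
    · have := hB h'; omega
    · omega

lemma globalShift {a : PInj n} (ha : IsIOF a)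
    (hd : n - 2 ≤ (domF a).card) (hi : n - 2 ≤ (imF a).card) :
    ∀ d x y x' y', x' - x = d → a.R x y → a.R x' y' → x < x' → y' = y + (x' - x) := by
  intro d
  induction d using Nat.strong_induction_on with
  | _ d IH =>
    intro x y x' y' hdiff hxy hxy' hlt
    by_cases hmid : ∃ w z, a.R w z ∧ x < w ∧ w < x'
    · obtain ⟨w, z, hwz, hw1, hw2⟩ := hmid
      have e1 := IH (w - x) (by omega) x y w z rfl hxy hwz hw1
      have e2 := IH (x' - w) (by omega) w z x' y' rfl hwz hxy' hw2
      omega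
    · exact localShift ha hd hi hxy hxy' hlt
        (fun w z hwz hc => hmid ⟨w, z, hwz, hc.1, hc.2⟩)

lemma shiftEq {a : PInj n} (ha : IsIOF a)
    (hd : n - 2 ≤ (domF a).card) (hi : n - 2 ≤ (imF a).card)
    {x y x' y' : ℕ} (hxy : a.R x y) (hxy' : a.R x' y') : y + x' = y' + x := by
  rcases lt_trichotomy x x' with h | h | h
  · have := globalShift ha hd hi (x' - x) x y x' y' rfl hxy hxy' h; omega
  · subst h; have := a.func hxy hxy'; omega
  · have := globalShift ha hd hi (x - x') x' y' x y rfl hxy' hxy h; omega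

lemma pickLow {a : PInj n} (hn : 4 ≤ n) (hd : n - 2 ≤ (domF a).card) :
    ∃ p yp, a.R p yp ∧ p ≤ 3 := by
  by_contra h
  push_neg at h
  have hsub : domF a ⊆ Finset.Icc 1 n \ Finset.Icc 1 3 := by
    intro w hw
    obtain ⟨z, hz⟩ := mem_domF.mp hw
    rw [Finset.mem_sdiff, Finset.mem_Icc, Finset.mem_Icc]
    have := h w z hz
    exact ⟨⟨(memIcc hz).1.1, (memIcc hz).1.2⟩, by omega⟩
  have hcard := Finset.card_le_card hsub
  rw [Finset.card_sdiff_of_subset (by intro w hw; rw [Finset.mem_Icc] at hw ⊢; omega),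
    Nat.card_Icc, Nat.card_Icc] at hcard
  omega

lemma pickHigh {a : PInj n} (hn : 4 ≤ n) (hd : n - 2 ≤ (domF a).card) :
    ∃ q yq, a.R q yq ∧ n - 2 ≤ q := by
  by_contra h
  push_neg at h
  have hsub : domF a ⊆ Finset.Icc 1 n \ Finset.Icc (n-2) n := by
    intro w hw
    obtain ⟨z, hz⟩ := mem_domF.mp hw
    rw [Finset.mem_sdiff, Finset.mem_Icc, Finset.mem_Icc]
    have := h w z hz
    exact ⟨⟨(memIcc hz).1.1, (memIcc hz).1.2⟩, by omega⟩
  have hcard := Finset.card_le_card hsub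
  rw [Finset.card_sdiff_of_subset (by intro w hw; rw [Finset.mem_Icc] at hw ⊢; omega),
    Nat.card_Icc, Nat.card_Icc] at hcard
  omega

lemma classify {a : PInj n} (hn : 4 ≤ n) (ha : IsIOF a)
    (hd : n - 2 ≤ (domF a).card) (hi : n - 2 ≤ (imF a).card) :
    (∀ x y, a.R x y → y = x) ∨ (∀ x y, a.R x y → y = x + 2) ∨
      (∀ x y, a.R x y → x = y + 2) := by
  obtain ⟨p, yp, hp, hp3⟩ := pickLow hn hd
  obtain ⟨q, yq, hq, hq3⟩ := pickHigh hn hd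
  have e1 : yp + q = yq + p := shiftEq ha hd hi hp hq
  have hb1 := memIcc hp
  have hb2 := memIcc hq
  have hpar : p % 2 = yp % 2 := ha.2.1 hp
  have htri : yp = p ∨ yp = p + 2 ∨ p = yp + 2 := by omega
  rcases htri with h | h | h
  · left; intro x y hxy; have := shiftEq ha hd hi hxy hp; omega
  · right; left; intro x y hxy; have := shiftEq ha hd hi hxy hp; omega
  · right; right; intro x y hxy; have := shiftEq ha hd hi hxy hp; omega

end Aux2

section Aux3
attribute [local instance] Classical.propDecidable
variable {n : ℕ}

lemma uMapR (hn : 4 ≤ n) {x y : ℕ} :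
    (uMap n (n - 2)).R x y ↔ 1 ≤ x ∧ x + 2 ≤ n ∧ y = x + 2 := by
  constructor
  · rintro ⟨hx, hy, (⟨h1, rfl⟩ | ⟨h1, rfl⟩)⟩ <;>
      rw [Set.mem_Icc] at hx hy <;> omega
  · rintro ⟨h1, h2, rfl⟩
    exact ⟨Set.mem_Icc.mpr ⟨h1, by omega⟩, Set.mem_Icc.mpr ⟨by omega, h2⟩,
      Or.inl ⟨by omega, rfl⟩⟩

lemma xMapR (hn : 4 ≤ n) {x y : ℕ} :
    (uMap n (n - 2)).inv.R x y ↔ 1 ≤ y ∧ y + 2 ≤ n ∧ x = y + 2 := by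
  show (uMap n (n - 2)).R y x ↔ _
  rw [uMapR hn]

lemma isIOF_u (hn : 4 ≤ n) : IsIOF (uMap n (n - 2)) := by
  refine ⟨?_, ?_, ?_, ?_⟩
  · intro x y x' y' h h' hlt
    rw [uMapR hn] at h h'
    omega
  · intro x y h
    rw [uMapR hn] at h
    omega
  · intro x y x' y' h h' hfl
    rw [uMapR hn] at h h'
    obtain ⟨_, _, rfl⟩ := h
    obtain ⟨_, _, rfl⟩ := h'
    obtain ⟨hodd, hc⟩ := hfl
    rw [Nat.odd_iff] at hodd
    exact ⟨by rw [Nat.odd_iff]; omega, by omega⟩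
  · intro x y x' y' h h' hfl
    rw [uMapR hn] at h h'
    obtain ⟨_, _, rfl⟩ := h
    obtain ⟨_, _, rfl⟩ := h'
    obtain ⟨hodd, hc⟩ := hfl
    rw [Nat.odd_iff] at hodd
    exact ⟨by rw [Nat.odd_iff]; omega, by omega⟩

lemma isIOF_inv {a : PInj n} (ha : IsIOF a) : IsIOF a.inv := by
  obtain ⟨ho, hp, hf, hf'⟩ := ha
  refine ⟨?_, ?_, ?_, ?_⟩
  · intro x y x' y' h h' hlt
    rcases lt_trichotomy y y' with hc | hc | hc
    · exact hc
    · subst hc; exact absurd (a.func h h') (by omega)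
    · exact absurd (ho h' h hc) (by omega)
  · intro x y h
    exact (hp h).symm
  · intro x y x' y' h h' hfl
    exact hf' h h' hfl
  · intro x y x' y' h h' hfl
    exact hf h h' hfl

lemma domF_u (hn : 4 ≤ n) : domF (uMap n (n - 2)) = Finset.Icc 1 (n - 2) := by
  ext x
  rw [mem_domF, Finset.mem_Icc]
  constructor
  · rintro ⟨y, hy⟩; rw [uMapR hn] at hy; omega
  · intro h; exact ⟨x + 2, (uMapR hn).mpr ⟨by omega, by omega, rfl⟩⟩

lemma imF_u (hn : 4 ≤ n) : imF (uMap n (n - 2)) = Finset.Icc 3 n := by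
  ext y
  rw [mem_imF, Finset.mem_Icc]
  constructor
  · rintro ⟨x, hx⟩; rw [uMapR hn] at hx; omega
  · intro h
    refine ⟨y - 2, (uMapR hn).mpr ⟨by omega, by omega, by omega⟩⟩

lemma domF_inv (a : PInj n) : domF a.inv = imF a := by
  ext x; rw [mem_domF, mem_imF]; exact Iff.rfl

lemma imF_inv (a : PInj n) : imF a.inv = domF a := by
  ext x; rw [mem_domF, mem_imF]; exact Iff.rfl

lemma eq_uMap {a : PInj n} (hn : 4 ≤ n) (hd : n - 2 ≤ (domF a).card)
    (h2 : ∀ x y, a.R x y → y = x + 2) : a = uMap n (n - 2) := by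
  have hdom : domF a = Finset.Icc 1 (n - 2) := by
    apply Finset.eq_of_subset_of_card_le
    · intro x hx
      obtain ⟨y, hy⟩ := mem_domF.mp hx
      have := h2 x y hy
      have := memIcc hy
      rw [Finset.mem_Icc]
      omega
    · rw [Nat.card_Icc]; omega
  ext x y
  rw [uMapR hn]
  constructor
  · intro h
    have h3 := h2 x y h
    have h4 := memIcc h
    exact ⟨by omega, by omega, h3⟩
  · rintro ⟨h1, h3, rfl⟩
    have : x ∈ domF a := by rw [hdom, Finset.mem_Icc]; omega
    obtain ⟨y', hy'⟩ := mem_domF.mp this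
    have := h2 x y' hy'
    subst this
    exact hy'

lemma eq_xMap {a : PInj n} (hn : 4 ≤ n) (hi : n - 2 ≤ (imF a).card)
    (h2 : ∀ x y, a.R x y → x = y + 2) : a = (uMap n (n - 2)).inv := by
  have him : imF a = Finset.Icc 1 (n - 2) := by
    apply Finset.eq_of_subset_of_card_le
    · intro y hy
      obtain ⟨x, hx⟩ := mem_imF.mp hy
      have := h2 x y hx
      have := memIcc hx
      rw [Finset.mem_Icc]
      omega
    · rw [Nat.card_Icc]; omega
  ext x y
  rw [xMapR hn]
  constructor
  · intro h
    have h3 := h2 x y h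
    have h4 := memIcc h
    exact ⟨by omega, by omega, h3⟩
  · rintro ⟨h1, h3, rfl⟩
    have : y ∈ imF a := by rw [him, Finset.mem_Icc]; omega
    obtain ⟨x', hx'⟩ := mem_imF.mp this
    have := h2 x' y hx'
    subst this
    exact hx'

end Aux3

section Aux4
attribute [local instance] Classical.propDecidable
variable {n : ℕ}

lemma card_dom_le {l : List (PInj n)} {a b : PInj n} (hb : b ∈ l) (hl : l.prod = a) :
    (domF a).card ≤ (domF b).card := by
  obtain ⟨l1, l2, rfl⟩ := List.append_of_mem hb
  rw [List.prod_append, List.prod_cons] at hl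
  set p := l1.prod with hpdef
  have hdec : ∀ x z, a.R x z → ∃ y y', p.R x y ∧ b.R y y' ∧ (l2.prod).R y' z := by
    intro x z hz
    rw [← hl] at hz
    obtain ⟨y, h1, y', h2, h3⟩ := hz
    exact ⟨y, y', h1, h2, h3⟩
  set f : ℕ → ℕ := fun x => if h : ∃ y, p.R x y then h.choose else 0 with hf
  have hfspec : ∀ x z, a.R x z → p.R x (f x) ∧ ∃ y', b.R (f x) y' := by
    intro x z hz
    obtain ⟨y, y', h1, h2, _⟩ := hdec x z hz
    have hex : ∃ y, p.R x y := ⟨y, h1⟩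
    have hfx : f x = hex.choose := by rw [hf]; exact dif_pos hex
    have hcy : hex.choose = y := p.func hex.choose_spec h1
    rw [hfx, hcy]
    exact ⟨h1, y', h2⟩
  apply Finset.card_le_card_of_injOn f
  · intro x hx
    obtain ⟨z, hz⟩ := mem_domF.mp hx
    obtain ⟨_, y', h2⟩ := hfspec x z hz
    exact mem_domF.mpr ⟨y', h2⟩
  · intro x hx x' hx' heq
    obtain ⟨z, hz⟩ := mem_domF.mp (Finset.mem_coe.mp hx)
    obtain ⟨z', hz'⟩ := mem_domF.mp (Finset.mem_coe.mp hx')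
    have e1 := (hfspec x z hz).1
    have e2 := (hfspec x' z' hz').1
    rw [← heq] at e2
    exact p.inj e1 e2

lemma card_im_le {l : List (PInj n)} {a b : PInj n} (hb : b ∈ l) (hl : l.prod = a) :
    (imF a).card ≤ (imF b).card := by
  obtain ⟨l1, l2, rfl⟩ := List.append_of_mem hb
  rw [List.prod_append, List.prod_cons] at hl
  set q := l2.prod with hqdef
  have hdec : ∀ x z, a.R x z → ∃ y y', (l1.prod).R x y ∧ b.R y y' ∧ q.R y' z := by
    intro x z hz
    rw [← hl] at hz
    obtain ⟨y, h1, y', h2, h3⟩ := hz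
    exact ⟨y, y', h1, h2, h3⟩
  set g : ℕ → ℕ := fun z => if h : ∃ y', q.R y' z then h.choose else 0 with hg
  have hgspec : ∀ x z, a.R x z → q.R (g z) z ∧ ∃ y, b.R y (g z) := by
    intro x z hz
    obtain ⟨y, y', _, h2, h3⟩ := hdec x z hz
    have hex : ∃ y', q.R y' z := ⟨y', h3⟩
    have hgz : g z = hex.choose := by rw [hg]; exact dif_pos hex
    have hcy : hex.choose = y' := q.inj hex.choose_spec h3
    rw [hgz, hcy]
    exact ⟨h3, y, h2⟩
  apply Finset.card_le_card_of_injOn g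
  · intro z hz
    obtain ⟨x, hx⟩ := mem_imF.mp hz
    obtain ⟨_, y, h2⟩ := hgspec x z hx
    exact mem_imF.mpr ⟨y, h2⟩
  · intro z hz z' hz' heq
    obtain ⟨x, hx⟩ := mem_imF.mp (Finset.mem_coe.mp hz)
    obtain ⟨x', hx'⟩ := mem_imF.mp (Finset.mem_coe.mp hz')
    have e1 := (hgspec x z hx).1
    have e2 := (hgspec x' z' hx').1
    rw [← heq] at e2
    exact q.func e1 e2

lemma prod_le_of (l : List (PInj n)) (h : ∀ b ∈ l, ∀ x y, b.R x y → y ≤ x) :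
    ∀ x y, l.prod.R x y → y ≤ x := by
  induction l with
  | nil =>
    intro x y h1
    rw [List.prod_nil] at h1
    obtain ⟨_, rfl⟩ := h1
    exact le_refl _
  | cons c t IH =>
    intro x y h1
    rw [List.prod_cons] at h1
    obtain ⟨m, h2, h3⟩ := h1
    have e1 := h c List.mem_cons_self x m h2
    have e2 := IH (fun b hb => h b (List.mem_cons_of_mem _ hb)) m y h3
    omega

lemma prod_ge_of (l : List (PInj n)) (h : ∀ b ∈ l, ∀ x y, b.R x y → x ≤ y) :
    ∀ x y, l.prod.R x y → x ≤ y := by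
  induction l with
  | nil =>
    intro x y h1
    rw [List.prod_nil] at h1
    obtain ⟨_, rfl⟩ := h1
    exact le_refl _
  | cons c t IH =>
    intro x y h1
    rw [List.prod_cons] at h1
    obtain ⟨m, h2, h3⟩ := h1
    have e1 := h c List.mem_cons_self x m h2
    have e2 := IH (fun b hb => h b (List.mem_cons_of_mem _ hb)) m y h3
    omega

end Aux4

/-- every generating set of `IOF_n^par` contains `u_{n-2}` and `x_{n-2}`. -/
theorem stmt11 (n : ℕ) (hn : 4 ≤ n) (G : Set (PInj n)) (hG : Generates n G) :
    uMap n (n - 2) ∈ G ∧ (uMap n (n - 2)).inv ∈ G := by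
  obtain ⟨hG1, hG2⟩ := hG
  have hu : IsIOF (uMap n (n - 2)) := isIOF_u hn
  have hdu : n - 2 ≤ (domF (uMap n (n - 2))).card := by
    rw [domF_u hn, Nat.card_Icc]; omega
  have hiu : n - 2 ≤ (imF (uMap n (n - 2))).card := by
    rw [imF_u hn, Nat.card_Icc]; omega
  constructor
  · obtain ⟨l, hlG, hlp⟩ := hG2 _ hu
    have key : ∃ b ∈ l, b = uMap n (n - 2) := by
      by_contra hc
      push_neg at hc
      have hle : ∀ b ∈ l, ∀ x y, b.R x y → y ≤ x := by
        intro b hb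
        have hbIOF := hG1 b (hlG b hb)
        have hbd : n - 2 ≤ (domF b).card := le_trans hdu (card_dom_le hb hlp)
        have hbi : n - 2 ≤ (imF b).card := le_trans hiu (card_im_le hb hlp)
        rcases classify hn hbIOF hbd hbi with h | h | h
        · intro x y hxy; exact (h x y hxy).le
        · exact absurd (eq_uMap hn hbd h) (hc b hb)
        · intro x y hxy; have := h x y hxy; omega
      have h13 : (uMap n (n - 2)).R 1 3 := (uMapR hn).mpr ⟨le_refl 1, by omega, rfl⟩
      rw [← hlp] at h13
      exact absurd (prod_le_of l hle 1 3 h13) (by omega)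
    obtain ⟨b, hb, rfl⟩ := key
    exact hlG _ hb
  · have hx : IsIOF (uMap n (n - 2)).inv := isIOF_inv hu
    have hdx : n - 2 ≤ (domF (uMap n (n - 2)).inv).card := by
      rw [domF_inv]; exact hiu
    have hix : n - 2 ≤ (imF (uMap n (n - 2)).inv).card := by
      rw [imF_inv]; exact hdu
    obtain ⟨l, hlG, hlp⟩ := hG2 _ hx
    have key : ∃ b ∈ l, b = (uMap n (n - 2)).inv := by
      by_contra hc
      push_neg at hc
      have hge : ∀ b ∈ l, ∀ x y, b.R x y → x ≤ y := by
        intro b hb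
        have hbIOF := hG1 b (hlG b hb)
        have hbd : n - 2 ≤ (domF b).card := le_trans hdx (card_dom_le hb hlp)
        have hbi : n - 2 ≤ (imF b).card := le_trans hix (card_im_le hb hlp)
        rcases classify hn hbIOF hbd hbi with h | h | h
        · intro x y hxy; exact (h x y hxy).ge
        · intro x y hxy; have := h x y hxy; omega
        · exact absurd (eq_xMap hn hbi h) (hc b hb)
      have h31 : (uMap n (n - 2)).inv.R 3 1 := (xMapR hn).mpr ⟨le_refl 1, by omega, rfl⟩
      rw [← hlp] at h31
      exact absurd (prod_ge_of l hge 3 1 h31) (by omega)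
    obtain ⟨b, hb, rfl⟩ := key
    exact hlG _ hb
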